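/- Let K ≥ 1, h_1,…,h_K > 0, σ > 0, 0 < ε < K, and let M > 0 be the unique positive real with ∑_{k=1}^K 1/(1 + M h_k²) = ε. Define g* = (1/σ)·sqrt(ε − ∑_{k=1}^K (1/(1 + M h_k²))²) and b*_k = σ M h_k / ((1 + M h_k²)·sqrt(ε − ∑_{j=1}^K (1/(1 + M h_j²))²)). Then ∑_{k=1}^K (g* h_k b*_k − 1)² + σ² (g*)² = ε and ∑_{k=1}^K (b*_k)² = σ² M; moreover σ² M equals the closed-form value σ² (∑_{k=1}^K (1 − 1/(1 + M h_k²))²/h_k²) / (ε − ∑_{k=1}^K (1/(1 + M h_k²))²). -/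

import Mathlib

/-- With `M > 0` the unique solution of `∑ k 1/(1 + M h k²) = ε`, the
scaling factors `g* = (1/σ)·sqrt(ε − ∑ k (1/(1 + M h k²))²)` and
`b* k = σ M h k/((1 + M h k²)·sqrt(ε − ∑ j (1/(1 + M h j²))²))` of Theorem 2 satisfy
`MSE(g*, b*) = ε` and `∑ k (b* k)² = σ² M`, and `σ² M` equals the closed-form value
`σ² (∑ k (1 − 1/(1 + M h k²))²/h k²)/(ε − ∑ k (1/(1 + M h k²))²)`. -/
theorem aircomp_theorem2_attainment (K : ℕ) (hK : 1 ≤ K) (h : Fin K → ℝ)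
    (hh : ∀ k, 0 < h k) (σ : ℝ) (hσ : 0 < σ) (ε : ℝ) (hε0 : 0 < ε) (hεK : ε < K)
    (M : ℝ) (hM : 0 < M) (hMε : (∑ k, 1 / (1 + M * h k ^ 2)) = ε)
    (gstar : ℝ) (bstar : Fin K → ℝ)
    (hg : gstar = (1 / σ) * Real.sqrt (ε - ∑ k, (1 / (1 + M * h k ^ 2)) ^ 2))
    (hb : ∀ k, bstar k = σ * M * h k /
        ((1 + M * h k ^ 2) * Real.sqrt (ε - ∑ j, (1 / (1 + M * h j ^ 2)) ^ 2))) :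
    (∑ k, (gstar * h k * bstar k - 1) ^ 2) + σ ^ 2 * gstar ^ 2 = ε
    ∧ (∑ k, bstar k ^ 2) = σ ^ 2 * M
    ∧ σ ^ 2 * M = σ ^ 2 * (∑ k, (1 - 1 / (1 + M * h k ^ 2)) ^ 2 / h k ^ 2)
        / (ε - ∑ k, (1 / (1 + M * h k ^ 2)) ^ 2) := by
  have hden : ∀ k, 0 < 1 + M * h k ^ 2 := by
    intro k; have := sq_nonneg (h k); nlinarith
  have hSlt : (∑ k, (1 / (1 + M * h k ^ 2)) ^ 2) < ε := by
    rw [← hMε]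
    apply Finset.sum_lt_sum_of_nonempty
    · rw [Finset.univ_nonempty_iff]
      exact Fin.pos_iff_nonempty.mp (by omega)
    · intro k _
      have h1 : 0 < 1 / (1 + M * h k ^ 2) := by positivity
      have h2 : 1 / (1 + M * h k ^ 2) < 1 := by
        rw [div_lt_one (hden k)]
        have := mul_pos hM (pow_pos (hh k) 2)
        linarith
      nlinarith
  set S : ℝ := ∑ k, (1 / (1 + M * h k ^ 2)) ^ 2 with hS
  have hpos : 0 < ε - S := by linarith
  set R : ℝ := Real.sqrt (ε - S) with hR
  have hR0 : 0 < R := Real.sqrt_pos.mpr hpos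
  have hR2 : R ^ 2 = ε - S := Real.sq_sqrt hpos.le
  -- pointwise identity 1
  have key1 : ∀ k, gstar * h k * bstar k - 1 = -(1 / (1 + M * h k ^ 2)) := by
    intro k
    rw [hg, hb k]
    have hd := (hden k).ne'
    field_simp
    ring
  have part1 : (∑ k, (gstar * h k * bstar k - 1) ^ 2) + σ ^ 2 * gstar ^ 2 = ε := by
    have : (∑ k, (gstar * h k * bstar k - 1) ^ 2) = S := by
      rw [hS]
      apply Finset.sum_congr rfl
      intro k _
      rw [key1 k]; ring
    rw [this, hg]
    field_simp
    rw [hR2]; ring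
  have key2 : ∀ k, bstar k ^ 2
      = σ ^ 2 * M / R ^ 2 * (1 / (1 + M * h k ^ 2) - (1 / (1 + M * h k ^ 2)) ^ 2) := by
    intro k
    rw [hb k]
    have hd := (hden k).ne'
    field_simp
    ring
  have part2 : (∑ k, bstar k ^ 2) = σ ^ 2 * M := by
    calc (∑ k, bstar k ^ 2)
        = ∑ k, σ ^ 2 * M / R ^ 2 * (1 / (1 + M * h k ^ 2) - (1 / (1 + M * h k ^ 2)) ^ 2) := by
          exact Finset.sum_congr rfl fun k _ => key2 k
      _ = σ ^ 2 * M / R ^ 2 * ((∑ k, 1 / (1 + M * h k ^ 2)) - S) := by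
          rw [hS, ← Finset.sum_sub_distrib, Finset.mul_sum]
      _ = σ ^ 2 * M := by
          rw [hMε, hR2]
          field_simp
  have key3 : ∀ k, (1 - 1 / (1 + M * h k ^ 2)) ^ 2 / h k ^ 2
      = M * (1 / (1 + M * h k ^ 2) - (1 / (1 + M * h k ^ 2)) ^ 2) := by
    intro k
    have hd := (hden k).ne'
    have hk := (hh k).ne'
    field_simp
    ring
  have part3 : σ ^ 2 * M = σ ^ 2 * (∑ k, (1 - 1 / (1 + M * h k ^ 2)) ^ 2 / h k ^ 2)
      / (ε - S) := by
    have hsum : (∑ k, (1 - 1 / (1 + M * h k ^ 2)) ^ 2 / h k ^ 2) = M * (ε - S) := by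
      calc (∑ k, (1 - 1 / (1 + M * h k ^ 2)) ^ 2 / h k ^ 2)
          = ∑ k, M * (1 / (1 + M * h k ^ 2) - (1 / (1 + M * h k ^ 2)) ^ 2) := by
            exact Finset.sum_congr rfl fun k _ => key3 k
        _ = M * ((∑ k, 1 / (1 + M * h k ^ 2)) - S) := by
            rw [hS, ← Finset.sum_sub_distrib, Finset.mul_sum]
        _ = M * (ε - S) := by rw [hMε]
    rw [hsum]
    field_simp
  exact ⟨part1, part2, part3⟩
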